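/- arXiv:1810.08349 — 2 statements merged into one kernel-verified Lean document; each statement's English description precedes it below -/
import Mathlib

section
/- Let (X,Σ_X,μ) and (Y,Σ_Y,ν) be finite positive measure spaces, let Φ : M^∞_μ → M^∞_ν be a Markov transfunction with Φμ = ν, and let Φ^† : M^∞_ν → M^∞_μ be the unique linear total-variation-continuous map with Φ^†(1_B ν)(A) = Φ(1_A μ)(B) for all measurable A ⊆ X, B ⊆ Y. Then Φ^† is a Markov transfunction: it is linear and total-variation continuous, Φ^†ρ ≥ 0 whenever ρ ≥ 0, and (Φ^†ρ)(X) = ρ(Y) for all ρ ∈ M^∞_ν. -/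
open MeasureTheory Filter Topology

/-- total variation norm of a finite signed measure -/
noncomputable def tv {Z : Type*} [MeasurableSpace Z] (s : SignedMeasure Z) : ℝ :=
  (SignedMeasure.totalVariation s Set.univ).toReal

/-- `M^∞_μ := {fμ : f ∈ L^∞(X,μ)}` -/
def Minf {Z : Type*} [MeasurableSpace Z] (μ : Measure Z) : Set (SignedMeasure Z) :=
  {s | ∃ f : Z → ℝ, MemLp f ⊤ μ ∧ μ.withDensityᵥ f = s}

/-- a transfunction `M^∞_μ → M^∞_ν` is linear and continuous (bounded) w.r.t. total variation -/
def LinTV {X Y : Type*} [MeasurableSpace X] [MeasurableSpace Y]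
    {μ : Measure X} {ν : Measure Y} (Φ : Minf μ → Minf ν) : Prop :=
  (∀ a b c : Minf μ, c.1 = a.1 + b.1 → (Φ c).1 = (Φ a).1 + (Φ b).1) ∧
  (∀ (r : ℝ) (a c : Minf μ), c.1 = r • a.1 → (Φ c).1 = r • (Φ a).1) ∧
  (∃ C : ℝ, ∀ a : Minf μ, tv (Φ a).1 ≤ C * tv a.1)

/-- the duality relation `Ψ(1_B ν)(A) = Φ(1_A μ)(B)` for all measurable `A ⊆ X`, `B ⊆ Y` -/
def DualEq {X Y : Type*} [MeasurableSpace X] [MeasurableSpace Y]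
    (μ : Measure X) (ν : Measure Y) (Φ : Minf μ → Minf ν) (Ψ : Minf ν → Minf μ) : Prop :=
  ∀ (A : Set X) (B : Set Y), MeasurableSet A → MeasurableSet B →
    ∀ (a : Minf μ) (b : Minf ν),
      a.1 = μ.withDensityᵥ (A.indicator fun _ => (1 : ℝ)) →
      b.1 = ν.withDensityᵥ (B.indicator fun _ => (1 : ℝ)) →
      (Ψ b).1 A = (Φ a).1 B

lemma tv_nonneg {Z : Type*} [MeasurableSpace Z] (s : SignedMeasure Z) : 0 ≤ tv s :=
  ENNReal.toReal_nonneg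

lemma tv_repr {Z : Type*} [MeasurableSpace Z] (s : SignedMeasure Z) :
    ∃ i : Set Z, MeasurableSet i ∧
      (∀ A, MeasurableSet A → A ⊆ i → 0 ≤ s A) ∧
      (∀ A, MeasurableSet A → A ⊆ iᶜ → s A ≤ 0) ∧
      tv s = s i - s iᶜ := by
  obtain ⟨i, hi₁, hi₂, hi₃, hpos, hneg⟩ := s.toJordanDecomposition_spec
  refine ⟨i, hi₁, ?_, ?_, ?_⟩
  · intro A hA hAi
    exact s.nonneg_of_zero_le_restrict (s.zero_le_restrict_subset hi₁ hAi hi₂)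
  · intro A hA hAi
    exact s.nonpos_of_restrict_le_zero (s.restrict_le_zero_subset hi₁.compl hAi hi₃)
  · rw [tv, SignedMeasure.totalVariation, Measure.add_apply, hpos, hneg,
      SignedMeasure.toMeasureOfZeroLE_apply _ hi₂ hi₁ MeasurableSet.univ,
      SignedMeasure.toMeasureOfLEZero_apply _ hi₃ hi₁.compl MeasurableSet.univ,
      ENNReal.toReal_add ENNReal.coe_ne_top ENNReal.coe_ne_top]
    simp [sub_eq_add_neg]

lemma abs_apply_le_tv {Z : Type*} [MeasurableSpace Z] (s : SignedMeasure Z) (A : Set Z) :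
    |s A| ≤ tv s := by
  by_cases hA : MeasurableSet A
  · obtain ⟨i, hi, hip, hin, htv⟩ := tv_repr s
    have h1 : s A = s (A ∩ i) + s (A ∩ iᶜ) := by
      rw [← VectorMeasure.of_union
        (Set.disjoint_of_subset Set.inter_subset_right Set.inter_subset_right
          disjoint_compl_right) (hA.inter hi) (hA.inter hi.compl)]
      congr 1
      rw [← Set.inter_union_distrib_left, Set.union_compl_self, Set.inter_univ]
    have h2 : s i = s (A ∩ i) + s (Aᶜ ∩ i) := by
      rw [← VectorMeasure.of_union
        (Set.disjoint_of_subset Set.inter_subset_left Set.inter_subset_left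
          disjoint_compl_right) (hA.inter hi) (hA.compl.inter hi)]
      congr 1
      rw [← Set.union_inter_distrib_right, Set.union_compl_self, Set.univ_inter]
    have h3 : s iᶜ = s (A ∩ iᶜ) + s (Aᶜ ∩ iᶜ) := by
      rw [← VectorMeasure.of_union
        (Set.disjoint_of_subset Set.inter_subset_left Set.inter_subset_left
          disjoint_compl_right) (hA.inter hi.compl) (hA.compl.inter hi.compl)]
      congr 1
      rw [← Set.union_inter_distrib_right, Set.union_compl_self, Set.univ_inter]
    have p1 : 0 ≤ s (A ∩ i) := hip _ (hA.inter hi) Set.inter_subset_right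
    have p2 : 0 ≤ s (Aᶜ ∩ i) := hip _ (hA.compl.inter hi) Set.inter_subset_right
    have n1 : s (A ∩ iᶜ) ≤ 0 := hin _ (hA.inter hi.compl) Set.inter_subset_right
    have n2 : s (Aᶜ ∩ iᶜ) ≤ 0 := hin _ (hA.compl.inter hi.compl) Set.inter_subset_right
    rw [htv, abs_le]
    constructor <;> linarith
  · rw [VectorMeasure.not_measurable _ hA, abs_zero]
    obtain ⟨i, hi, hip, hin, htv⟩ := tv_repr s
    have p1 : 0 ≤ s i := hip _ hi le_rfl
    have n1 : s iᶜ ≤ 0 := hin _ hi.compl le_rfl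
    rw [htv]; linarith

lemma tv_withDensityᵥ_le {Z : Type*} [MeasurableSpace Z] (ξ : Measure Z)
    (h : Z → ℝ) (hh : Integrable h ξ) :
    tv (ξ.withDensityᵥ h) ≤ ∫ z, |h z| ∂ξ := by
  obtain ⟨i, hi, hip, hin, htv⟩ := tv_repr (ξ.withDensityᵥ h)
  rw [htv, withDensityᵥ_apply hh hi, withDensityᵥ_apply hh hi.compl]
  have e1 : ∫ z in i, h z ∂ξ ≤ ∫ z in i, |h z| ∂ξ := by
    calc ∫ z in i, h z ∂ξ ≤ |∫ z in i, h z ∂ξ| := le_abs_self _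
    _ ≤ ∫ z in i, |h z| ∂ξ := by
        simpa [Real.norm_eq_abs] using norm_integral_le_integral_norm (μ := ξ.restrict i) h
  have e2 : -∫ z in iᶜ, h z ∂ξ ≤ ∫ z in iᶜ, |h z| ∂ξ := by
    calc -∫ z in iᶜ, h z ∂ξ ≤ |∫ z in iᶜ, h z ∂ξ| := neg_le_abs _
    _ ≤ ∫ z in iᶜ, |h z| ∂ξ := by
        simpa [Real.norm_eq_abs] using norm_integral_le_integral_norm (μ := ξ.restrict iᶜ) h
  have e3 : ∫ z in i, |h z| ∂ξ + ∫ z in iᶜ, |h z| ∂ξ = ∫ z, |h z| ∂ξ :=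
    integral_add_compl hi hh.abs
  linarith

lemma memtop_integrable {Z : Type*} [MeasurableSpace Z] {ξ : Measure Z} [IsFiniteMeasure ξ]
    {f : Z → ℝ} (hf : MemLp f ⊤ ξ) : Integrable f ξ :=
  memLp_one_iff_integrable.mp (hf.mono_exponent le_top)

lemma simple_memtop {Z : Type*} [MeasurableSpace Z] (ξ : Measure Z) (t : SimpleFunc Z ℝ) :
    MemLp ⇑t ⊤ ξ := by
  obtain ⟨C, hC⟩ := t.exists_forall_norm_le
  exact memLp_top_of_bound t.aestronglyMeasurable C (ae_of_all _ hC)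

lemma ind_memtop {Z : Type*} [MeasurableSpace Z] (ξ : Measure Z) [IsFiniteMeasure ξ]
    {s : Set Z} (hs : MeasurableSet s) (c : ℝ) :
    MemLp (s.indicator fun _ => c) ⊤ ξ :=
  memLp_indicator_const ⊤ hs c (Or.inr (measure_ne_top ξ s))

lemma wdv_ind_nonneg {Z : Type*} [MeasurableSpace Z] (ξ : Measure Z) [IsFiniteMeasure ξ]
    {s : Set Z} (hs : MeasurableSet s) :
    0 ≤ ξ.withDensityᵥ (s.indicator fun _ => (1 : ℝ)) := by
  rw [VectorMeasure.le_iff]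
  intro i hi
  rw [VectorMeasure.zero_apply, withDensityᵥ_apply (memtop_integrable (ind_memtop ξ hs 1)) hi]
  exact setIntegral_nonneg hi fun x _ => Set.indicator_nonneg (fun _ _ => zero_le_one) x

lemma ind_one_univ {Z : Type*} [MeasurableSpace Z] (ξ : Measure Z) [IsFiniteMeasure ξ] :
    ξ.withDensityᵥ (Set.univ.indicator fun _ => (1 : ℝ)) = ξ.toSignedMeasure := by
  ext j hj
  rw [Set.indicator_univ, withDensityᵥ_apply (integrable_const 1) hj,
    Measure.toSignedMeasure_apply_measurable hj, setIntegral_const, smul_eq_mul, mul_one]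

lemma simple_psi {X Y : Type*} [MeasurableSpace X] [MeasurableSpace Y]
    (μ : Measure X) (ν : Measure Y) [IsFiniteMeasure μ] [IsFiniteMeasure ν]
    (Φ : Minf μ → Minf ν)
    (hΦpos : ∀ a : Minf μ, 0 ≤ a.1 → 0 ≤ (Φ a).1)
    (hΦμ : ∀ a : Minf μ, a.1 = μ.toSignedMeasure → (Φ a).1 = ν.toSignedMeasure)
    (Ψ : Minf ν → Minf μ) (hΨlin : LinTV Ψ) (hdual : DualEq μ ν Φ Ψ) :
    ∀ t : SimpleFunc Y ℝ, ∀ b : Minf ν, b.1 = ν.withDensityᵥ ⇑t →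
      ((∀ y, 0 ≤ t y) → ∀ A : Set X, MeasurableSet A → 0 ≤ (Ψ b).1 A) ∧
      (Ψ b).1 Set.univ = b.1 Set.univ := by
  intro t
  induction t using SimpleFunc.induction with
  | @const c s hs =>
    intro b hb
    have hcoe : ⇑(SimpleFunc.piecewise s hs (SimpleFunc.const Y c) (SimpleFunc.const Y 0)) =
        s.indicator fun _ => c := by
      funext y; by_cases hy : y ∈ s <;> simp [SimpleFunc.piecewise_apply, hy]
    have hfun : (s.indicator fun _ => (c : ℝ)) = c • (s.indicator fun _ => (1 : ℝ)) := by
      funext y; by_cases hy : y ∈ s <;> simp [hy]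
    set b₀ : Minf ν := ⟨ν.withDensityᵥ (s.indicator fun _ => (1 : ℝ)),
      ⟨_, ind_memtop ν hs 1, rfl⟩⟩ with hb₀
    have hsm : (Ψ b).1 = c • (Ψ b₀).1 :=
      hΨlin.2.1 c b₀ b (by rw [hb, hcoe, hfun, withDensityᵥ_smul])
    constructor
    · intro hnn A hA
      set a₀ : Minf μ := ⟨μ.withDensityᵥ (A.indicator fun _ => (1 : ℝ)),
        ⟨_, ind_memtop μ hA 1, rfl⟩⟩ with ha₀
      have hd := hdual A s hA hs a₀ b₀ rfl rfl
      have hpos0 : 0 ≤ (Φ a₀).1 s := by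
        have h := VectorMeasure.le_iff.mp (hΦpos a₀ (wdv_ind_nonneg μ hA)) s hs
        simpa using h
      rw [hsm, VectorMeasure.smul_apply, hd]
      rcases s.eq_empty_or_nonempty with rfl | ⟨y, hy⟩
      · simp
      · have hc : 0 ≤ c := by simpa [SimpleFunc.piecewise_apply, hy] using hnn y
        exact smul_nonneg hc hpos0
    · set a₁ : Minf μ := ⟨μ.withDensityᵥ (Set.univ.indicator fun _ => (1 : ℝ)),
        ⟨_, ind_memtop μ MeasurableSet.univ 1, rfl⟩⟩ with ha₁
      have hd := hdual Set.univ s MeasurableSet.univ hs a₁ b₀ rfl rfl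
      have hΦa₁ : (Φ a₁).1 = ν.toSignedMeasure := hΦμ a₁ (ind_one_univ μ)
      rw [hsm, VectorMeasure.smul_apply, hd, hΦa₁,
        Measure.toSignedMeasure_apply_measurable hs, hb, hcoe,
        withDensityᵥ_apply (memtop_integrable (ind_memtop ν hs c)) MeasurableSet.univ,
        setIntegral_univ, integral_indicator_const c hs, smul_eq_mul, smul_eq_mul, mul_comm]
  | @add f g hdisj hf hg =>
    intro b hb
    have hfi : Integrable ⇑f ν := memtop_integrable (simple_memtop ν f)
    have hgi : Integrable ⇑g ν := memtop_integrable (simple_memtop ν g)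
    set bf : Minf ν := ⟨ν.withDensityᵥ ⇑f, ⟨_, simple_memtop ν f, rfl⟩⟩ with hbf
    set bg : Minf ν := ⟨ν.withDensityᵥ ⇑g, ⟨_, simple_memtop ν g, rfl⟩⟩ with hbg
    have hb' : b.1 = bf.1 + bg.1 := by
      rw [hb, SimpleFunc.coe_add, withDensityᵥ_add hfi hgi]
    have hadd := hΨlin.1 bf bg b hb'
    obtain ⟨hfpos, hfuniv⟩ := hf bf rfl
    obtain ⟨hgpos, hguniv⟩ := hg bg rfl
    constructor
    · intro hnn A hA
      have hfn : ∀ y, 0 ≤ f y := by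
        intro y
        by_cases hy : f y = 0
        · simp [hy]
        · have hg0 : g y = 0 := by
            have := Set.disjoint_left.mp hdisj (show y ∈ Function.support ⇑f from hy)
            simpa [Function.mem_support] using this
          have h := hnn y
          simpa [SimpleFunc.coe_add, hg0] using h
      have hgn : ∀ y, 0 ≤ g y := by
        intro y
        by_cases hy : g y = 0
        · simp [hy]
        · have hf0 : f y = 0 := by
            have := Set.disjoint_right.mp hdisj (show y ∈ Function.support ⇑g from hy)
            simpa [Function.mem_support] using this
          have h := hnn y
          simpa [SimpleFunc.coe_add, hf0] using h
      rw [hadd, VectorMeasure.add_apply]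
      exact add_nonneg (hfpos hfn A hA) (hgpos hgn A hA)
    · rw [hadd, VectorMeasure.add_apply, hfuniv, hguniv, hb', VectorMeasure.add_apply]

/-- If `Φ : M^∞_μ → M^∞_ν` is a Markov transfunction with `Φμ = ν` and
`Ψ = Φ^†` is its dagger (linear, total-variation continuous, and satisfying
`Ψ(1_B ν)(A) = Φ(1_A μ)(B)`), then `Ψ` is a Markov transfunction: it is positive and
measure-preserving (it is linear and total-variation continuous by assumption). -/
theorem stmt10 {X Y : Type*} [MeasurableSpace X] [MeasurableSpace Y]
    (μ : Measure X) (ν : Measure Y) [IsFiniteMeasure μ] [IsFiniteMeasure ν]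
    (Φ : Minf μ → Minf ν) (hΦlin : LinTV Φ)
    (hΦpos : ∀ a : Minf μ, 0 ≤ a.1 → 0 ≤ (Φ a).1)
    (hΦpres : ∀ a : Minf μ, (Φ a).1 Set.univ = a.1 Set.univ)
    (hΦμ : ∀ a : Minf μ, a.1 = μ.toSignedMeasure → (Φ a).1 = ν.toSignedMeasure)
    (Ψ : Minf ν → Minf μ) (hΨlin : LinTV Ψ) (hdual : DualEq μ ν Φ Ψ) :
    -- Ψ is positive
    (∀ b : Minf ν, 0 ≤ b.1 → 0 ≤ (Ψ b).1) ∧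
    -- Ψ is measure-preserving: (Ψρ)(X) = ρ(Y)
    (∀ b : Minf ν, (Ψ b).1 Set.univ = b.1 Set.univ) := by
  obtain ⟨C₀, hC₀⟩ := hΨlin.2.2
  set C := max C₀ 0 with hCdef
  have hC0 : 0 ≤ C := le_max_right _ _
  have hC : ∀ a : Minf ν, tv (Ψ a).1 ≤ C * tv a.1 := fun a =>
    (hC₀ a).trans (mul_le_mul_of_nonneg_right (le_max_left _ _) (tv_nonneg _))
  have spsi := simple_psi μ ν Φ hΦpos hΦμ Ψ hΨlin hdual
  have key : ∀ (b : Minf ν), ∀ ε : ℝ, 0 < ε → ∃ (t : SimpleFunc Y ℝ) (bt d : Minf ν),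
      bt.1 = ν.withDensityᵥ ⇑t ∧ b.1 = bt.1 + d.1 ∧ tv d.1 < ε ∧
      (0 ≤ b.1 → ∀ y, 0 ≤ t y) := by
    intro b ε hε
    obtain ⟨f, hf, hbf⟩ := b.2
    have hfi : Integrable f ν := memtop_integrable hf
    have hf1 : MemLp f 1 ν := hf.mono_exponent le_top
    obtain ⟨t₀, ht₀, -⟩ := hf1.exists_simpleFunc_eLpNorm_sub_lt (by simp)
      (ne_of_gt (ENNReal.ofReal_pos.mpr hε))
    have hts : ∃ t : SimpleFunc Y ℝ, eLpNorm (f - ⇑t) 1 ν < ENNReal.ofReal ε ∧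
        (0 ≤ b.1 → ∀ y, 0 ≤ t y) := by
      by_cases hbpos : 0 ≤ b.1
      · have hf0 : 0 ≤ᵐ[ν] f := by
          apply ae_nonneg_of_forall_setIntegral_nonneg hfi
          intro s hs _
          have h := VectorMeasure.le_iff.mp hbpos s hs
          rw [← hbf, withDensityᵥ_apply hfi hs] at h
          simpa using h
        refine ⟨t₀.map fun r => max r 0, ?_, fun _ y => by
          simp [SimpleFunc.map_apply]⟩
        refine lt_of_le_of_lt (eLpNorm_mono_ae ?_) ht₀
        filter_upwards [hf0] with y hy
        simp only [Pi.sub_apply, Real.norm_eq_abs, SimpleFunc.coe_map, Function.comp_apply]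
        have hy' : (0 : ℝ) ≤ f y := hy
        calc |f y - max (t₀ y) 0| = |max (f y) 0 - max (t₀ y) 0| := by rw [max_eq_left hy']
        _ ≤ |f y - t₀ y| := abs_max_sub_max_le_abs _ _ _
      · exact ⟨t₀, ht₀, fun h => absurd h hbpos⟩
    obtain ⟨t, htε, htnn⟩ := hts
    have hti : Integrable ⇑t ν := memtop_integrable (simple_memtop ν t)
    refine ⟨t, ⟨ν.withDensityᵥ ⇑t, ⟨_, simple_memtop ν t, rfl⟩⟩,
      ⟨ν.withDensityᵥ (f - ⇑t), ⟨_, hf.sub (simple_memtop ν t), rfl⟩⟩, rfl, ?_, ?_, htnn⟩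
    · show b.1 = ν.withDensityᵥ ⇑t + ν.withDensityᵥ (f - ⇑t)
      rw [← hbf, ← withDensityᵥ_add hti (hfi.sub hti)]
      congr 1
      funext y
      simp
    · show tv (ν.withDensityᵥ (f - ⇑t)) < ε
      have h1 := tv_withDensityᵥ_le ν (f - ⇑t) (hfi.sub hti)
      have h2 : ∫ z, |(f - ⇑t) z| ∂ν = (eLpNorm (f - ⇑t) 1 ν).toReal := by
        rw [eLpNorm_one_eq_lintegral_enorm,
          ← integral_norm_eq_lintegral_enorm (hfi.sub hti).aestronglyMeasurable]
        simp [Real.norm_eq_abs]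
      have h3 : (eLpNorm (f - ⇑t) 1 ν).toReal < ε := ENNReal.toReal_lt_of_lt_ofReal htε
      rw [h2] at h1
      exact lt_of_le_of_lt h1 h3
  refine ⟨?_, ?_⟩
  · intro b hb
    rw [VectorMeasure.le_iff]
    intro A hA
    rw [VectorMeasure.zero_apply]
    have main : ∀ ε : ℝ, 0 < ε → -ε ≤ (Ψ b).1 A := by
      intro ε hε
      obtain ⟨t, bt, d, hbt, hsum, htv, hnn⟩ := key b (ε / (C + 1)) (by positivity)
      have hdec := hΨlin.1 bt d b hsum
      have h1 : 0 ≤ (Ψ bt).1 A := (spsi t bt hbt).1 (hnn hb) A hA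
      have h2 : |(Ψ d).1 A| ≤ C * (ε / (C + 1)) :=
        le_trans (le_trans (abs_apply_le_tv _ _) (hC d))
          (mul_le_mul_of_nonneg_left (le_of_lt htv) hC0)
      have h3 : C * (ε / (C + 1)) ≤ ε := by
        have ha : C * (ε / (C + 1)) ≤ (C + 1) * (ε / (C + 1)) :=
          mul_le_mul_of_nonneg_right (by linarith) (by positivity)
        have heq : (C + 1) * (ε / (C + 1)) = ε := by field_simp
        linarith
      have h4 := abs_le.mp h2
      have h5 : (Ψ b).1 A = (Ψ bt).1 A + (Ψ d).1 A := by
        rw [hdec, VectorMeasure.add_apply]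
      linarith [h4.1]
    by_contra hcon
    push_neg at hcon
    have := main (-(Ψ b).1 A / 2) (by linarith)
    linarith
  · intro b
    have main : ∀ ε : ℝ, 0 < ε → |(Ψ b).1 Set.univ - b.1 Set.univ| ≤ ε := by
      intro ε hε
      obtain ⟨t, bt, d, hbt, hsum, htv, -⟩ := key b (ε / (C + 2)) (by positivity)
      have hdec := hΨlin.1 bt d b hsum
      have h1 : (Ψ bt).1 Set.univ = bt.1 Set.univ := (spsi t bt hbt).2
      have h2 : |(Ψ d).1 Set.univ| ≤ C * (ε / (C + 2)) :=
        le_trans (le_trans (abs_apply_le_tv _ _) (hC d))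
          (mul_le_mul_of_nonneg_left (le_of_lt htv) hC0)
      have h3 : |d.1 Set.univ| ≤ ε / (C + 2) :=
        le_trans (abs_apply_le_tv _ _) (le_of_lt htv)
      have h5 : (Ψ b).1 Set.univ = (Ψ bt).1 Set.univ + (Ψ d).1 Set.univ := by
        rw [hdec, VectorMeasure.add_apply]
      have h6 : b.1 Set.univ = bt.1 Set.univ + d.1 Set.univ := by
        rw [hsum, VectorMeasure.add_apply]
      have hcc : C * (ε / (C + 2)) + ε / (C + 2) ≤ ε := by
        have ha : (C + 1) * (ε / (C + 2)) ≤ (C + 2) * (ε / (C + 2)) :=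
          mul_le_mul_of_nonneg_right (by linarith) (by positivity)
        have heq : (C + 2) * (ε / (C + 2)) = ε := by field_simp
        have hb' : C * (ε / (C + 2)) + ε / (C + 2) = (C + 1) * (ε / (C + 2)) := by ring
        linarith
      have h7 := abs_le.mp h2
      have h8 := abs_le.mp h3
      rw [abs_le]
      constructor <;> linarith
    by_contra hcon
    have habs : 0 < |(Ψ b).1 Set.univ - b.1 Set.univ| :=
      abs_pos.mpr (sub_ne_zero.mpr hcon)
    have := main (|(Ψ b).1 Set.univ - b.1 Set.univ| / 2) (by linarith)
    linarith
end

section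
/- Let X and Y be locally compact Polish spaces and let Φ be a map from finite signed Borel measures on X to finite signed Borel measures on Y that is linear and weakly continuous (λ_n → λ weakly implies Φλ_n → Φλ weakly). Then there exists a sequence (Φ_n) of simple transfunctions — each of the form Φ_n λ = Σ_{i=1}^{m_n} (∫_X f_{n,i} dλ) ρ_{n,i} with f_{n,i} ∈ C_b(X) and ρ_{n,i} finite signed Borel measures on Y — such that for every finite signed Borel measure λ on X, Φ_n λ converges weakly to Φλ, i.e. ∫_Y g d(Φ_n λ) → ∫_Y g d(Φλ) for every g ∈ C_b(Y). -/
open MeasureTheory Filter Topology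

/-- integral of a function against a finite signed measure (via the Jordan decomposition) -/
noncomputable def sint {Z : Type*} [MeasurableSpace Z] (s : SignedMeasure Z) (f : Z → ℝ) : ℝ :=
  ∫ z, f z ∂s.toJordanDecomposition.posPart - ∫ z, f z ∂s.toJordanDecomposition.negPart

section helpers
variable {Z : Type*} [MeasurableSpace Z]

lemma sint_eq_of_eq {s : SignedMeasure Z} {μ ν : Measure Z}
    [IsFiniteMeasure μ] [IsFiniteMeasure ν]
    (h : s = μ.toSignedMeasure - ν.toSignedMeasure)
    {f : Z → ℝ} (hμ : Integrable f μ) (hν : Integrable f ν)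
    (hp : Integrable f s.toJordanDecomposition.posPart)
    (hn : Integrable f s.toJordanDecomposition.negPart) :
    sint s f = ∫ z, f z ∂μ - ∫ z, f z ∂ν := by
  set p := s.toJordanDecomposition.posPart with hpdef
  set q := s.toJordanDecomposition.negPart with hqdef
  have hJ : p.toSignedMeasure - q.toSignedMeasure = μ.toSignedMeasure - ν.toSignedMeasure := by
    have := s.toSignedMeasure_toJordanDecomposition
    rw [JordanDecomposition.toSignedMeasure] at this
    rw [this]; exact h ▸ rfl
  have key : p + ν = μ + q := by
    ext A hA
    have h2 : (p.toSignedMeasure - q.toSignedMeasure) A = (μ.toSignedMeasure - ν.toSignedMeasure) A := by rw [hJ]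
    simp only [VectorMeasure.sub_apply, Measure.toSignedMeasure_apply_measurable hA] at h2
    have h3 : (p A).toReal + (ν A).toReal = (μ A).toReal + (q A).toReal := by
      simp only [Measure.real] at h2; linarith
    rw [Measure.add_apply, Measure.add_apply]
    rw [← ENNReal.toReal_add (measure_ne_top _ _) (measure_ne_top _ _),
      ← ENNReal.toReal_add (measure_ne_top _ _) (measure_ne_top _ _)] at h3
    exact (ENNReal.toReal_eq_toReal_iff' (by finiteness) (by finiteness)).mp h3
  have hint : ∫ z, f z ∂p + ∫ z, f z ∂ν = ∫ z, f z ∂μ + ∫ z, f z ∂q := by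
    rw [← integral_add_measure hp hν, ← integral_add_measure hμ hn, key]
  rw [sint]; rw [← hpdef, ← hqdef]; linarith
end helpers

section helpers2
variable {Z : Type*} [MeasurableSpace Z] [MetricSpace Z] [BorelSpace Z]

lemma jd_eq (s : SignedMeasure Z) : s = s.toJordanDecomposition.posPart.toSignedMeasure -
    s.toJordanDecomposition.negPart.toSignedMeasure := by
  have := s.toSignedMeasure_toJordanDecomposition
  rw [JordanDecomposition.toSignedMeasure] at this
  exact this.symm

lemma sint_toSM (μ : Measure Z) [IsFiniteMeasure μ] (f : BoundedContinuousFunction Z ℝ) :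
    sint μ.toSignedMeasure f = ∫ z, f z ∂μ := by
  have h : μ.toSignedMeasure = μ.toSignedMeasure - (0 : Measure Z).toSignedMeasure := by
    rw [Measure.toSignedMeasure_zero, sub_zero]
  rw [sint_eq_of_eq h (f.integrable μ) (f.integrable 0) (f.integrable _) (f.integrable _)]
  simp

lemma sint_zero (f : BoundedContinuousFunction Z ℝ) : sint (0 : SignedMeasure Z) f = 0 := by
  have h : (0 : SignedMeasure Z) = (0 : Measure Z).toSignedMeasure - (0 : Measure Z).toSignedMeasure := by
    simp [Measure.toSignedMeasure_zero]
  rw [sint_eq_of_eq h (f.integrable 0) (f.integrable 0) (f.integrable _) (f.integrable _)]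
  simp

lemma sint_neg (s : SignedMeasure Z) (f : BoundedContinuousFunction Z ℝ) :
    sint (-s) f = - sint s f := by
  have hs : s = s.toJordanDecomposition.posPart.toSignedMeasure -
      s.toJordanDecomposition.negPart.toSignedMeasure := by
    conv_lhs => rw [← s.toSignedMeasure_toJordanDecomposition]
    rfl
  have h : -s = s.toJordanDecomposition.negPart.toSignedMeasure -
      s.toJordanDecomposition.posPart.toSignedMeasure := by
    rw [← neg_sub, ← hs]
  rw [sint_eq_of_eq h (f.integrable _) (f.integrable _) (f.integrable _) (f.integrable _), sint]
  ring

lemma sint_add (s t : SignedMeasure Z) (f : BoundedContinuousFunction Z ℝ) :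
    sint (s + t) f = sint s f + sint t f := by
  have hs := jd_eq s
  have ht := jd_eq t
  have h : s + t = (s.toJordanDecomposition.posPart + t.toJordanDecomposition.posPart).toSignedMeasure
      - (s.toJordanDecomposition.negPart + t.toJordanDecomposition.negPart).toSignedMeasure := by
    rw [Measure.toSignedMeasure_add, Measure.toSignedMeasure_add]
    conv_lhs => rw [hs, ht]
    abel
  rw [sint_eq_of_eq h (f.integrable _) (f.integrable _) (f.integrable _) (f.integrable _)]
  rw [integral_add_measure (f.integrable _) (f.integrable _),
      integral_add_measure (f.integrable _) (f.integrable _)]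
  show _ = sint s f + sint t f
  rw [sint, sint]; ring

lemma sint_smul (r : ℝ) (s : SignedMeasure Z) (f : BoundedContinuousFunction Z ℝ) :
    sint (r • s) f = r * sint s f := by
  have hs := jd_eq s
  rcases le_or_gt 0 r with hr | hr
  · have h : r • s = (r.toNNReal • s.toJordanDecomposition.posPart).toSignedMeasure
        - (r.toNNReal • s.toJordanDecomposition.negPart).toSignedMeasure := by
      rw [Measure.toSignedMeasure_smul, Measure.toSignedMeasure_smul, NNReal.smul_def,
        NNReal.smul_def, Real.coe_toNNReal _ hr]
      conv_lhs => rw [hs]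
      ext A hA; simp [mul_sub]
    rw [sint_eq_of_eq h (f.integrable _) (f.integrable _) (f.integrable _) (f.integrable _)]
    rw [integral_smul_nnreal_measure, integral_smul_nnreal_measure]
    simp only [NNReal.smul_def, Real.coe_toNNReal _ hr, smul_eq_mul]
    rw [sint]; ring
  · have h1 : r • s = -((-r) • s) := by ext A hA; simp
    rw [h1, sint_neg]
    have : sint ((-r) • s) f = (-r) * sint s f := by
      have hr' : (0:ℝ) ≤ -r := by linarith
      have h : (-r) • s = ((-r).toNNReal • s.toJordanDecomposition.posPart).toSignedMeasure
          - ((-r).toNNReal • s.toJordanDecomposition.negPart).toSignedMeasure := by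
        rw [Measure.toSignedMeasure_smul, Measure.toSignedMeasure_smul, NNReal.smul_def,
          NNReal.smul_def, Real.coe_toNNReal _ hr']
        conv_lhs => rw [hs]
        ext A hA; simp [mul_sub]
      rw [sint_eq_of_eq h (f.integrable _) (f.integrable _) (f.integrable _) (f.integrable _)]
      rw [integral_smul_nnreal_measure, integral_smul_nnreal_measure]
      simp only [NNReal.smul_def, Real.coe_toNNReal _ hr', smul_eq_mul]
      rw [sint]; ring
    rw [this]; ring

lemma sint_finset_sum {ι : Type*} (u : Finset ι) (m : ι → SignedMeasure Z)
    (f : BoundedContinuousFunction Z ℝ) :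
    sint (∑ i ∈ u, m i) f = ∑ i ∈ u, sint (m i) f := by
  classical
  induction u using Finset.induction_on with
  | empty => simp [sint_zero]
  | insert a u' h ih => rw [Finset.sum_insert h, Finset.sum_insert h, sint_add, ih]

lemma sint_dirac (x : Z) (f : BoundedContinuousFunction Z ℝ) :
    sint (Measure.dirac x).toSignedMeasure f = f x := by
  rw [sint_toSM, integral_dirac]
end helpers2

section construction
variable (X : Type*) [MetricSpace X] [TopologicalSpace.SeparableSpace X]
  [LocallyCompactSpace X]

attribute [local instance] UniformSpace.secondCountable_of_separable

/-- radius used at stage n -/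
noncomputable def rad (n : ℕ) : ℝ := 1 / ((n : ℝ) + 1)

lemma rad_pos (n : ℕ) : 0 < rad n := by unfold rad; positivity

lemma cover_exists (n : ℕ) : ∃ t : Finset X,
    compactCovering X n ⊆ ⋃ q ∈ t, Metric.ball q (rad n) := by
  apply (isCompact_compactCovering X n).elim_finite_subcover
    (fun q : X => Metric.ball q (rad n)) (fun q => Metric.isOpen_ball)
  intro x _
  exact Set.mem_iUnion.mpr ⟨x, Metric.mem_ball_self (rad_pos n)⟩

/-- finite set of centers at stage n -/
noncomputable def cen (n : ℕ) : Finset X := (cover_exists X n).choose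

lemma cen_spec (n : ℕ) : compactCovering X n ⊆ ⋃ q ∈ cen X n, Metric.ball q (rad n) :=
  (cover_exists X n).choose_spec

/-- number of centers -/
noncomputable def mm (n : ℕ) : ℕ := (cen X n).card

/-- the centers, indexed -/
noncomputable def pp (n : ℕ) (i : Fin (mm X n)) : X := ((cen X n).equivFin.symm i : X)

/-- the bump functions -/
noncomputable def gg (n : ℕ) (i : Fin (mm X n)) (x : X) : ℝ := max 0 (rad n - dist x (pp X n i))

/-- sum of bumps -/
noncomputable def GG (n : ℕ) (x : X) : ℝ := ∑ i, gg X n i x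

open Classical in
/-- denominator -/
noncomputable def DD (n : ℕ) (x : X) : ℝ :=
  GG X n x + Metric.infDist x (compactCovering X n) +
    (if (compactCovering X n).Nonempty then 0 else 1)

lemma gg_nonneg (n : ℕ) (i : Fin (mm X n)) (x : X) : 0 ≤ gg X n i x := le_max_left _ _

lemma gg_cont (n : ℕ) (i : Fin (mm X n)) : Continuous (gg X n i) :=
  continuous_const.max (continuous_const.sub (continuous_id.dist continuous_const))

lemma GG_nonneg (n : ℕ) (x : X) : 0 ≤ GG X n x :=
  Finset.sum_nonneg fun i _ => gg_nonneg X n i x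

lemma gg_le_GG (n : ℕ) (i : Fin (mm X n)) (x : X) : gg X n i x ≤ GG X n x :=
  Finset.single_le_sum (fun j _ => gg_nonneg X n j x) (Finset.mem_univ i)

lemma GG_cont (n : ℕ) : Continuous (GG X n) :=
  continuous_finset_sum _ fun i _ => gg_cont X n i

lemma GG_pos_of_mem (n : ℕ) {x : X} (hx : x ∈ compactCovering X n) : 0 < GG X n x := by
  obtain ⟨q, hq, hdist⟩ : ∃ q ∈ cen X n, x ∈ Metric.ball q (rad n) := by
    simpa using cen_spec X n hx
  set i : Fin (mm X n) := (cen X n).equivFin ⟨q, hq⟩ with hi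
  have hpi : pp X n i = q := by
    simp [pp, hi]
  have : 0 < gg X n i x := by
    rw [gg, hpi]
    have := Metric.mem_ball.mp hdist
    exact lt_max_of_lt_right (by linarith)
  exact lt_of_lt_of_le this (gg_le_GG X n i x)

lemma DD_pos (n : ℕ) (x : X) : 0 < DD X n x := by
  classical
  rw [DD]
  by_cases hK : (compactCovering X n).Nonempty
  · rw [if_pos hK, add_zero]
    rcases eq_or_lt_of_le (Metric.infDist_nonneg (s := compactCovering X n) (x := x)) with h0 | h0
    · have hx : x ∈ compactCovering X n := by
        rw [((isCompact_compactCovering X n).isClosed).mem_iff_infDist_zero hK]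
        exact h0.symm
      have := GG_pos_of_mem X n hx
      linarith
    · have := GG_nonneg X n x
      linarith
  · rw [if_neg hK]
    have h1 := GG_nonneg X n x
    have h2 := Metric.infDist_nonneg (s := compactCovering X n) (x := x)
    linarith

lemma GG_le_DD (n : ℕ) (x : X) : GG X n x ≤ DD X n x := by
  classical
  rw [DD]
  have h2 := Metric.infDist_nonneg (s := compactCovering X n) (x := x)
  have h3 : (0:ℝ) ≤ if (compactCovering X n).Nonempty then 0 else 1 := by positivity
  linarith

lemma DD_cont (n : ℕ) : Continuous (DD X n) := by
  classical
  exact ((GG_cont X n).add (Metric.continuous_infDist_pt _)).add continuous_const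

/-- the partition-of-unity functions, as bounded continuous functions -/
noncomputable def fb (n : ℕ) (i : Fin (mm X n)) : BoundedContinuousFunction X ℝ :=
  BoundedContinuousFunction.mkOfBound
    ⟨fun x => gg X n i x / DD X n x,
      (gg_cont X n i).div (DD_cont X n) fun x => (DD_pos X n x).ne'⟩ 1
    (by
      intro x y
      have hb : ∀ z : X, gg X n i z / DD X n z ∈ Set.Icc (0:ℝ) 1 := by
        intro z
        constructor
        · exact div_nonneg (gg_nonneg X n i z) (DD_pos X n z).le
        · rw [div_le_one (DD_pos X n z)]
          exact le_trans (gg_le_GG X n i z) (GG_le_DD X n z)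
      obtain ⟨h1, h2⟩ := hb x
      obtain ⟨h3, h4⟩ := hb y
      rw [ContinuousMap.coe_mk, Real.dist_eq, abs_sub_le_iff]
      constructor <;> linarith)

lemma fb_apply (n : ℕ) (i : Fin (mm X n)) (x : X) : fb X n i x = gg X n i x / DD X n x := rfl

lemma fb_nonneg (n : ℕ) (i : Fin (mm X n)) (x : X) : 0 ≤ fb X n i x :=
  div_nonneg (gg_nonneg X n i x) (DD_pos X n x).le

lemma sum_fb_le_one (n : ℕ) (x : X) : ∑ i, fb X n i x ≤ 1 := by
  rw [show (∑ i, fb X n i x) = GG X n x / DD X n x by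
    rw [GG, Finset.sum_div]; rfl]
  rw [div_le_one (DD_pos X n x)]
  exact GG_le_DD X n x

lemma sum_fb_eq_one (n : ℕ) {x : X} (hx : x ∈ compactCovering X n) : ∑ i, fb X n i x = 1 := by
  classical
  have hDD : DD X n x = GG X n x := by
    rw [DD, if_pos ⟨x, hx⟩, Metric.infDist_zero_of_mem hx]
    ring
  rw [show (∑ i, fb X n i x) = GG X n x / DD X n x by
    rw [GG, Finset.sum_div]; rfl]
  rw [hDD, div_self (GG_pos_of_mem X n hx).ne']

lemma dist_lt_of_fb_ne_zero (n : ℕ) (i : Fin (mm X n)) (x : X) (h : fb X n i x ≠ 0) :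
    dist x (pp X n i) < rad n := by
  by_contra hc
  push_neg at hc
  apply h
  rw [fb_apply, gg, max_eq_left (by linarith), zero_div]

end construction

section pointwise
variable (X : Type*) [MetricSpace X] [TopologicalSpace.SeparableSpace X]
  [LocallyCompactSpace X]

attribute [local instance] UniformSpace.secondCountable_of_separable

lemma hF_tendsto (F : BoundedContinuousFunction X ℝ) (x : X) :
    Tendsto (fun n => ∑ i, F (pp X n i) * fb X n i x) atTop (nhds (F x)) := by
  rw [Metric.tendsto_atTop]
  intro ε hε
  obtain ⟨δ, hδ, hδ2⟩ := Metric.continuous_iff.mp F.continuous x (ε/2) (by linarith)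
  obtain ⟨N1, hN1⟩ := exists_mem_compactCovering x
  obtain ⟨N2, hN2⟩ := exists_nat_one_div_lt hδ
  refine ⟨max N1 N2, fun n hn => ?_⟩
  have hxK : x ∈ compactCovering X n :=
    compactCovering_subset X (le_trans (le_max_left _ _) hn) hN1
  have hrn : rad n < δ := by
    refine lt_of_le_of_lt ?_ hN2
    rw [rad]
    apply one_div_le_one_div_of_le (by positivity)
    have : (N2 : ℝ) ≤ n := Nat.cast_le.mpr (le_trans (le_max_right _ _) hn)
    linarith
  have hsum1 := sum_fb_eq_one X n hxK
  have hdiff : (∑ i, F (pp X n i) * fb X n i x) - F x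
      = ∑ i, (F (pp X n i) - F x) * fb X n i x := by
    have : ∑ i, (F (pp X n i) - F x) * fb X n i x
        = (∑ i, F (pp X n i) * fb X n i x) - F x * ∑ i, fb X n i x := by
      rw [Finset.mul_sum, ← Finset.sum_sub_distrib]
      exact Finset.sum_congr rfl fun i _ => by ring
    rw [this, hsum1, mul_one]
  rw [Real.dist_eq, hdiff]
  calc |∑ i, (F (pp X n i) - F x) * fb X n i x|
      ≤ ∑ i, |(F (pp X n i) - F x) * fb X n i x| := Finset.abs_sum_le_sum_abs _ _
    _ = ∑ i, |F (pp X n i) - F x| * fb X n i x := by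
        refine Finset.sum_congr rfl fun i _ => ?_
        rw [abs_mul, abs_of_nonneg (fb_nonneg X n i x)]
    _ ≤ ∑ i, (ε/2) * fb X n i x := by
        refine Finset.sum_le_sum fun i _ => ?_
        by_cases hz : fb X n i x = 0
        · rw [hz]; simp
        · have hd : dist x (pp X n i) < rad n := dist_lt_of_fb_ne_zero X n i x hz
          have : dist (pp X n i) x < δ := by rw [dist_comm]; linarith
          have := hδ2 _ this
          rw [Real.dist_eq] at this
          exact mul_le_mul_of_nonneg_right this.le (fb_nonneg X n i x)
    _ = ε/2 := by rw [← Finset.mul_sum, hsum1, mul_one]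
    _ < ε := by linarith

end pointwise


/-- On locally compact Polish spaces, every linear weakly continuous map `Φ`
between finite signed Borel measures is the weak limit of a sequence of simple
transfunctions `Φ_n λ = Σ_{i<m_n} (∫ f_{n,i} dλ) ρ_{n,i}`:
for every `λ`, `Φ_n λ → Φλ` weakly. -/
theorem stmt14 {X Y : Type*}
    [MetricSpace X] [CompleteSpace X] [TopologicalSpace.SeparableSpace X]
    [LocallyCompactSpace X] [MeasurableSpace X] [BorelSpace X]
    [MetricSpace Y] [CompleteSpace Y] [TopologicalSpace.SeparableSpace Y]
    [LocallyCompactSpace Y] [MeasurableSpace Y] [BorelSpace Y]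
    (Φ : SignedMeasure X → SignedMeasure Y)
    (hadd : ∀ s t : SignedMeasure X, Φ (s + t) = Φ s + Φ t)
    (hsmul : ∀ (r : ℝ) (s : SignedMeasure X), Φ (r • s) = r • Φ s)
    (hwc : ∀ (lams : ℕ → SignedMeasure X) (lam : SignedMeasure X),
      (∀ f : BoundedContinuousFunction X ℝ,
        Tendsto (fun n => sint (lams n) f) atTop (nhds (sint lam f))) →
      ∀ g : BoundedContinuousFunction Y ℝ,
        Tendsto (fun n => sint (Φ (lams n)) g) atTop (nhds (sint (Φ lam) g))) :
    ∃ (m : ℕ → ℕ) (f : (n : ℕ) → Fin (m n) → BoundedContinuousFunction X ℝ)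
      (ρ : (n : ℕ) → Fin (m n) → SignedMeasure Y),
      ∀ lam : SignedMeasure X, ∀ g : BoundedContinuousFunction Y ℝ,
        Tendsto (fun n => sint (∑ i, sint lam (f n i) • ρ n i) g) atTop
          (nhds (sint (Φ lam) g)) := by
  classical
  haveI : SecondCountableTopology X := UniformSpace.secondCountable_of_separable X
  have hΦ0 : Φ 0 = 0 := by
    have := hsmul 0 0
    rwa [zero_smul, zero_smul] at this
  have hΦsum : ∀ {ι : Type} [Fintype ι] (μs : ι → SignedMeasure X),
      Φ (∑ i, μs i) = ∑ i, Φ (μs i) := by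
    intro ι _ μs
    have : ∀ u : Finset ι, Φ (∑ i ∈ u, μs i) = ∑ i ∈ u, Φ (μs i) := by
      intro u
      induction u using Finset.induction_on with
      | empty => simpa using hΦ0
      | @insert a u' ha ih => rw [Finset.sum_insert ha, Finset.sum_insert ha, hadd, ih]
    exact this Finset.univ
  refine ⟨mm X, fb X, fun n i => Φ ((Measure.dirac (pp X n i)).toSignedMeasure), ?_⟩
  intro lam g
  set lams : ℕ → SignedMeasure X :=
    fun n => ∑ i, sint lam (fb X n i) • (Measure.dirac (pp X n i)).toSignedMeasure with hlams
  have key : ∀ F : BoundedContinuousFunction X ℝ,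
      Tendsto (fun n => sint (lams n) F) atTop (nhds (sint lam F)) := by
    intro F
    set μp := lam.toJordanDecomposition.posPart with hμp
    set μq := lam.toJordanDecomposition.negPart with hμq
    have heval : ∀ n, sint (lams n) F
        = ∫ x, (∑ i, F (pp X n i) * fb X n i x) ∂μp
        - ∫ x, (∑ i, F (pp X n i) * fb X n i x) ∂μq := by
      intro n
      rw [hlams, sint_finset_sum]
      rw [integral_finset_sum _ (fun i _ => ((fb X n i).integrable μp).const_mul _),
          integral_finset_sum _ (fun i _ => ((fb X n i).integrable μq).const_mul _),
          ← Finset.sum_sub_distrib]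
      refine Finset.sum_congr rfl fun i _ => ?_
      rw [sint_smul, sint_dirac, integral_const_mul, integral_const_mul, sint, ← hμp, ← hμq]
      ring
    have hlim : ∀ (μ : Measure X), IsFiniteMeasure μ →
        Tendsto (fun n => ∫ x, (∑ i, F (pp X n i) * fb X n i x) ∂μ) atTop
          (nhds (∫ x, F x ∂μ)) := by
      intro μ hfin
      apply tendsto_integral_of_dominated_convergence (fun _ => ‖F‖)
      · intro n
        exact (continuous_finset_sum _ fun i _ =>
          (continuous_const.mul (fb X n i).continuous)).aestronglyMeasurable
      · exact integrable_const _
      · intro n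
        filter_upwards with x
        calc ‖∑ i, F (pp X n i) * fb X n i x‖
            ≤ ∑ i, ‖F (pp X n i) * fb X n i x‖ := norm_sum_le _ _
          _ = ∑ i, ‖F (pp X n i)‖ * fb X n i x := by
              refine Finset.sum_congr rfl fun i _ => ?_
              rw [norm_mul, Real.norm_eq_abs (fb X n i x), abs_of_nonneg (fb_nonneg X n i x)]
          _ ≤ ∑ i, ‖F‖ * fb X n i x := by
              refine Finset.sum_le_sum fun i _ => ?_
              exact mul_le_mul_of_nonneg_right (F.norm_coe_le_norm _) (fb_nonneg X n i x)
          _ = ‖F‖ * ∑ i, fb X n i x := by rw [Finset.mul_sum]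
          _ ≤ ‖F‖ * 1 := by
              exact mul_le_mul_of_nonneg_left (sum_fb_le_one X _ x) (norm_nonneg F)
          _ = ‖F‖ := mul_one _
      · filter_upwards with x
        exact hF_tendsto X F x
    have h1 := hlim μp (by rw [hμp]; infer_instance)
    have h2 := hlim μq (by rw [hμq]; infer_instance)
    have := h1.sub h2
    rw [show (∫ x, F x ∂μp) - (∫ x, F x ∂μq) = sint lam F by rw [sint]] at this
    refine this.congr fun n => ?_
    rw [heval n]
  have main := hwc lams lam key g
  refine main.congr fun n => ?_
  congr 1
  rw [hlams]
  rw [hΦsum]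
  refine Finset.sum_congr rfl fun i _ => ?_
  rw [hsmul]
end
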